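/- Let k ∈ ℕ^I and let r be a color-symmetric Laurent polynomial in the variables z_{i,b} such that for every ordered pair (i,j) of distinct non-adjacent vertices of Q with k_i ≥ 1 and k_j ≥ 1, r vanishes under the substitution z_{i,1} = z_{j,1} (these are the wheel conditions of the shuffle algebra for pairs of colors with a_{ij} = 0). Then r is divisible, in the Laurent polynomial ring, by ∏ over unordered pairs {i,j} of distinct non-adjacent vertices of ∏_{1≤b≤k_i, 1≤c≤k_j} (z_{i,b} − z_{j,c}). -/

import Mathlib

set_option synthInstance.maxHeartbeats 1000000
set_option maxHeartbeats 1000000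
set_option linter.unusedSectionVars false
set_option linter.unusedVariables false


noncomputable section

namespace ADEShuffle

/-- The field `ℚ(q)`. -/
abbrev Fq : Type := RatFunc ℚ

/-- The variable `q`. -/
def qvar : Fq := RatFunc.X

/-- The index set of the variables `z_{i,b}`, `i ∈ I`, `1 ≤ b ≤ k_i`. -/
abbrev Vars (I : Type) (k : I → ℕ) : Type := Σ i : I, Fin (k i)

/-- Laurent polynomials over `ℚ(q)` in the variables `z_{i,b}`, encoded as finitely
supported functions on exponent vectors (the group algebra of `ℤ^{Vars}`). -/
abbrev LaurentPoly (I : Type) (k : I → ℕ) : Type := AddMonoidAlgebra Fq ((Vars I k) →₀ ℤ)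

/-- Evaluation of a Laurent polynomial at a point `z : Vars I k → ℚ(q)`. -/
def evalLaurent {I : Type} [Fintype I] {k : I → ℕ} (r : LaurentPoly I k)
    (z : Vars I k → Fq) : Fq :=
  ∑ e ∈ r.coeff.support, r.coeff e * ∏ sv, z sv ^ (e sv)

/-- Two distinct vertices are adjacent if some arrow joins them (in either direction). -/
abbrev Adjacent {I A : Type} (s t : A → I) (i j : I) : Prop :=
  ∃ a, (s a = i ∧ t a = j) ∨ (s a = j ∧ t a = i)

/-- A Laurent polynomial is color-symmetric if it is invariant under all permutations
of the variables preserving the color `i` (expressed via evaluations at points all of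
whose coordinates are nonzero, which determine the Laurent polynomial). -/
def ColorSym {I : Type} [Fintype I] {k : I → ℕ} (r : LaurentPoly I k) : Prop :=
  ∀ e : Vars I k ≃ Vars I k, (∀ sv : Vars I k, (e sv).1 = sv.1) →
    ∀ z : Vars I k → Fq, (∀ sv, z sv ≠ 0) →
      evalLaurent r (z ∘ e) = evalLaurent r z

/-- The Laurent polynomial `z_{i,b}` (one of the variables). -/
def zVar {I : Type} (k : I → ℕ) (sv : Vars I k) : LaurentPoly I k :=
  AddMonoidAlgebra.single (Finsupp.single sv 1) 1

/-! ### Auxiliary development -/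

variable {I : Type} [Fintype I] [DecidableEq I] {k : I → ℕ}

open AddMonoidAlgebra Finsupp

instance : IsDomain (LaurentPoly I k) := NoZeroDivisors.to_isDomain _

/-- The character `e ↦ ∏ z_sv ^ e_sv`, with unit values. -/
def charU (z : Vars I k → Fqˣ) : Multiplicative (Vars I k →₀ ℤ) →* Fqˣ where
  toFun e := ∏ sv, (z sv) ^ ((Multiplicative.toAdd e) sv)
  map_one' := by simp
  map_mul' a b := by
    simp [Finsupp.add_apply, zpow_add, Finset.prod_mul_distrib]

lemma charU_val (z : Vars I k → Fqˣ) (e : Vars I k →₀ ℤ) :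
    ((charU z (Multiplicative.ofAdd e) : Fqˣ) : Fq) = ∏ sv, (z sv : Fq) ^ (e sv) := by
  simp only [charU, MonoidHom.coe_mk, OneHom.coe_mk]
  have hmp : ((∏ sv, z sv ^ ((Multiplicative.toAdd (Multiplicative.ofAdd e)) sv) : Fqˣ) : Fq)
      = ∏ sv, ((z sv ^ ((Multiplicative.toAdd (Multiplicative.ofAdd e)) sv) : Fqˣ) : Fq) :=
    map_prod (Units.coeHom Fq) _ _
  rw [hmp]
  refine Finset.prod_congr rfl fun sv _ => ?_
  rw [Units.val_zpow_eq_zpow_val]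
  rfl

lemma charU_ofAdd_single (z : Vars I k → Fqˣ) (w : Vars I k) :
    charU z (Multiplicative.ofAdd (Finsupp.single w 1)) = z w := by
  simp only [charU, MonoidHom.coe_mk, OneHom.coe_mk]
  have : ∀ sv : Vars I k, z sv ^ ((Multiplicative.toAdd (Multiplicative.ofAdd
      (Finsupp.single w (1:ℤ)))) sv) = if w = sv then z sv else 1 := by
    intro sv
    rw [toAdd_ofAdd, Finsupp.single_apply]
    split_ifs <;> simp
  rw [Finset.prod_congr rfl fun sv _ => this sv]
  simp

/-- Evaluation at a point with unit coordinates, as an algebra homomorphism. -/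
def evalHom (z : Vars I k → Fqˣ) : LaurentPoly I k →ₐ[Fq] Fq :=
  AddMonoidAlgebra.lift Fq Fq (Vars I k →₀ ℤ) ((Units.coeHom Fq).comp (charU z))

lemma evalHom_single (z : Vars I k → Fqˣ) (e : Vars I k →₀ ℤ) (c : Fq) :
    evalHom z (AddMonoidAlgebra.single e c) = c * ((charU z (Multiplicative.ofAdd e) : Fqˣ) : Fq) := by
  rw [evalHom, AddMonoidAlgebra.lift_single]
  simp [smul_eq_mul]

lemma evalLaurent_eq_evalHom (r : LaurentPoly I k) (z : Vars I k → Fqˣ) :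
    evalLaurent r (fun sv => (z sv : Fq)) = evalHom z r := by
  rw [evalHom, AddMonoidAlgebra.lift_apply, evalLaurent, Finsupp.sum]
  refine Finset.sum_congr rfl fun e _ => ?_
  rw [smul_eq_mul]
  congr 1
  rw [← charU_val z e]
  rfl

/-- The character as a function of the point, a monoid hom on `(Vars → Fqˣ)`. -/
def bigChar (e : Vars I k →₀ ℤ) : ((Vars I k) → Fqˣ) →* Fq where
  toFun z := ∏ sv, ((z sv : Fq)) ^ (e sv)
  map_one' := by simp
  map_mul' a b := by
    simp [mul_zpow, Finset.prod_mul_distrib]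

/-- The unit `2` of `Fq`. -/
def qtwo : ℚˣ := ⟨2, 1/2, by norm_num, by norm_num⟩

def two' : Fqˣ := Units.map (algebraMap ℚ Fq).toMonoidHom qtwo

lemma two'_val : ((two' : Fqˣ) : Fq) = algebraMap ℚ Fq 2 := rfl

lemma two'_zpow_inj : Function.Injective fun n : ℤ => ((two' : Fqˣ) : Fq) ^ n := by
  intro m n h
  simp only at h
  rw [two'_val, ← map_zpow₀, ← map_zpow₀] at h
  have := (algebraMap ℚ Fq).injective h
  exact zpow_right_injective₀ (by norm_num : (0:ℚ) < 2) (by norm_num) this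

lemma two'_ne_one : ((two' : Fqˣ) : Fq) ≠ 1 := by
  rw [two'_val]
  intro h
  have h2 := (algebraMap ℚ Fq).injective (h.trans (map_one (algebraMap ℚ Fq)).symm)
  norm_num at h2

lemma bigChar_injective : Function.Injective (bigChar (I := I) (k := k)) := by
  intro e e' h
  ext sv
  have := DFunLike.congr_fun h (Function.update (1 : Vars I k → Fqˣ) sv two')
  simp only [bigChar, MonoidHom.coe_mk, OneHom.coe_mk] at this
  have hval : ∀ (f : Vars I k →₀ ℤ), (∏ w, ((Function.update (1 : Vars I k → Fqˣ) sv two' w : Fqˣ) : Fq) ^ (f w)) = ((two' : Fqˣ) : Fq) ^ (f sv) := by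
    intro f
    rw [Finset.prod_eq_single sv]
    · rw [Function.update_self]
    · intro w _ hw
      rw [Function.update_of_ne hw]
      simp
    · simp
  rw [hval e, hval e'] at this
  exact two'_zpow_inj this

/-- A Laurent polynomial vanishing at all points with unit coordinates is zero. -/
lemma eval_zero_of_all (r : LaurentPoly I k)
    (h : ∀ z : Vars I k → Fqˣ, evalHom z r = 0) : r = 0 := by
  have li : LinearIndependent Fq (fun e : (Vars I k →₀ ℤ) => ⇑(bigChar (I := I) (k := k) e)) := by
    have base := linearIndependent_monoidHom ((Vars I k) → Fqˣ) Fq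
    exact base.comp bigChar bigChar_injective
  have hsum : ∑ e ∈ r.coeff.support, (r.coeff e) • ⇑(bigChar (I := I) (k := k) e) = 0 := by
    funext z
    rw [Finset.sum_apply]
    simp only [Pi.smul_apply, smul_eq_mul, Pi.zero_apply]
    have := h z
    rw [← evalLaurent_eq_evalHom] at this
    rw [evalLaurent] at this
    convert this using 2
    rfl
  have hcoeff := linearIndependent_iff'.1 li r.coeff.support r.coeff hsum
  ext e
  by_cases he : e ∈ r.coeff.support
  · exact hcoeff e he
  · simpa using Finsupp.notMem_support_iff.1 he

/-- The exponent-level substitution `z_u ↦ z_v`. -/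
def gHom (u v : Vars I k) : (Vars I k →₀ ℤ) →+ (Vars I k →₀ ℤ) where
  toFun e := e + (e u) • (Finsupp.single v 1 - Finsupp.single u 1)
  map_zero' := by simp
  map_add' a b := by
    ext sv
    simp [Finsupp.add_apply, add_smul]
    ring

/-- The substitution `z_u ↦ z_v` as a ring homomorphism. -/
def subHom (u v : Vars I k) : LaurentPoly I k →+* LaurentPoly I k :=
  AddMonoidAlgebra.mapDomainRingHom Fq (gHom u v)

lemma subHom_single (u v : Vars I k) (e : Vars I k →₀ ℤ) (c : Fq) :
    subHom u v (AddMonoidAlgebra.single e c) = AddMonoidAlgebra.single (gHom u v e) c := by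
  show AddMonoidAlgebra.mapDomain (gHom u v) (AddMonoidAlgebra.single e c) = _
  rw [AddMonoidAlgebra.mapDomain_single]

lemma subHom_smul (u v : Vars I k) (c : Fq) (f : LaurentPoly I k) :
    subHom u v (c • f) = c • subHom u v f := by
  show AddMonoidAlgebra.mapDomain (gHom u v) (c • f) = c • AddMonoidAlgebra.mapDomain (gHom u v) f
  ext; simp

lemma gHom_single_u (u v : Vars I k) :
    gHom u v (Finsupp.single u 1) = Finsupp.single v 1 := by
  show (Finsupp.single u 1 : Vars I k →₀ ℤ) + ((Finsupp.single u (1:ℤ)) u) •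
      ((Finsupp.single v 1 : Vars I k →₀ ℤ) - Finsupp.single u 1) = _
  rw [Finsupp.single_eq_same]
  simp

lemma gHom_single_v (u v : Vars I k) (hu : u ≠ v) :
    gHom u v (Finsupp.single v 1) = Finsupp.single v 1 := by
  show (Finsupp.single v 1 : Vars I k →₀ ℤ) + ((Finsupp.single v (1:ℤ)) u) •
      ((Finsupp.single v 1 : Vars I k →₀ ℤ) - Finsupp.single u 1) = _
  have hz : ((Finsupp.single v (1:ℤ)) u) = 0 := by
    rw [Finsupp.single_apply, if_neg (fun h : v = u => hu h.symm)]
  rw [hz]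
  simp

/-- Monomials as units. -/
def monHom : Multiplicative (Vars I k →₀ ℤ) →* (LaurentPoly I k)ˣ where
  toFun f := ⟨AddMonoidAlgebra.single f.toAdd 1, AddMonoidAlgebra.single (-f.toAdd) 1,
    by rw [AddMonoidAlgebra.single_mul_single]; simp [AddMonoidAlgebra.one_def],
    by rw [AddMonoidAlgebra.single_mul_single]; simp [AddMonoidAlgebra.one_def]⟩
  map_one' := Units.ext (by simp [AddMonoidAlgebra.one_def])
  map_mul' a b := Units.ext (by
    show AddMonoidAlgebra.single (Multiplicative.toAdd (a*b)) 1 = AddMonoidAlgebra.single a.toAdd 1 * AddMonoidAlgebra.single b.toAdd 1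
    rw [AddMonoidAlgebra.single_mul_single, mul_one]; rfl)

lemma units_sub_dvd (R : Type*) [CommRing R] (a b : Rˣ) (n : ℤ) :
    ((a : R) - b) ∣ ((a ^ n : Rˣ) : R) - ((b ^ n : Rˣ) : R) := by
  obtain ⟨m, rfl | rfl⟩ := n.eq_nat_or_neg
  · rw [zpow_natCast, zpow_natCast, Units.val_pow_eq_pow_val, Units.val_pow_eq_pow_val]
    exact sub_dvd_pow_sub_pow _ _ m
  · set x : R := ((a ^ (-(m:ℤ)) : Rˣ) : R) with hxd
    set y : R := ((b ^ (-(m:ℤ)) : Rˣ) : R) with hyd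
    have hxR : x * ((a ^ m : Rˣ) : R) = 1 := by
      rw [hxd, ← Units.val_mul, zpow_neg, zpow_natCast, inv_mul_cancel, Units.val_one]
    have hyR : y * ((b ^ m : Rˣ) : R) = 1 := by
      rw [hyd, ← Units.val_mul, zpow_neg, zpow_natCast, inv_mul_cancel, Units.val_one]
    have key : x - y = (x * y) * (((b ^ m : Rˣ) : R) - ((a ^ m : Rˣ) : R)) := by
      calc x - y = x * (y * ((b ^ m : Rˣ) : R)) - (x * ((a ^ m : Rˣ) : R)) * y := by
            rw [hyR, hxR]; ring
        _ = (x * y) * (((b ^ m : Rˣ) : R) - ((a ^ m : Rˣ) : R)) := by ring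
    rw [key]
    refine Dvd.dvd.mul_left ?_ _
    have hneg : ((b ^ m : Rˣ) : R) - ((a ^ m : Rˣ) : R)
        = -(((a ^ m : Rˣ) : R) - ((b ^ m : Rˣ) : R)) := by ring
    rw [hneg, Units.val_pow_eq_pow_val, Units.val_pow_eq_pow_val]
    exact Dvd.dvd.neg_right (sub_dvd_pow_sub_pow _ _ m)

lemma zVar_eq_monHom (u : Vars I k) :
    zVar k u = ((monHom (Multiplicative.ofAdd (Finsupp.single u 1)) : (LaurentPoly I k)ˣ) : LaurentPoly I k) := rfl

/-- Division with remainder: `z_u - z_v` divides `r - subHom u v r`. -/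
lemma sub_subHom_dvd (u v : Vars I k) (hu : u ≠ v) (r : LaurentPoly I k) :
    (zVar k u - zVar k v) ∣ (r - subHom u v r) := by
  induction r using AddMonoidAlgebra.induction_on with
  | add f g hf hg =>
    have heq : (f + g) - subHom u v (f + g) = (f - subHom u v f) + (g - subHom u v g) := by
      rw [map_add]; ring
    rw [heq]; exact dvd_add hf hg
  | smul c f hf =>
    obtain ⟨w, hw⟩ := hf
    refine ⟨c • w, ?_⟩
    rw [subHom_smul, ← smul_sub, hw, mul_smul_comm]
  | of e =>
    have hof : (AddMonoidAlgebra.of Fq (Vars I k →₀ ℤ) (Multiplicative.ofAdd e))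
        = AddMonoidAlgebra.single e 1 := rfl
    rw [hof, subHom_single]
    set n : ℤ := e u with hn
    set e' : Vars I k →₀ ℤ := e - n • Finsupp.single u 1 with he'
    have he : e = e' + n • Finsupp.single u 1 := by rw [he']; abel
    have hge : gHom u v e = e' + n • Finsupp.single v 1 := by
      show e + (e u) • ((Finsupp.single v 1 : Vars I k →₀ ℤ) - Finsupp.single u 1) = _
      rw [he', ← hn]
      simp [smul_sub]
      abel
    have hs1 : (AddMonoidAlgebra.single e 1 : LaurentPoly I k)
        = AddMonoidAlgebra.single e' 1 * AddMonoidAlgebra.single (n • Finsupp.single u 1) 1 := by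
      rw [AddMonoidAlgebra.single_mul_single, mul_one, ← he]
    have hs2 : (AddMonoidAlgebra.single (gHom u v e) 1 : LaurentPoly I k)
        = AddMonoidAlgebra.single e' 1 * AddMonoidAlgebra.single (n • Finsupp.single v 1) 1 := by
      rw [AddMonoidAlgebra.single_mul_single, mul_one, ← hge]
    rw [hs1, hs2, ← mul_sub]
    refine Dvd.dvd.mul_left ?_ _
    have hmu : (AddMonoidAlgebra.single ((n : ℤ) • (Finsupp.single u 1 : Vars I k →₀ ℤ)) (1:Fq) : LaurentPoly I k)
        = ((monHom (Multiplicative.ofAdd (Finsupp.single u 1)) ^ n : (LaurentPoly I k)ˣ) : LaurentPoly I k) := by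
      rw [← map_zpow, ← ofAdd_zsmul]; rfl
    have hmv : (AddMonoidAlgebra.single ((n : ℤ) • (Finsupp.single v 1 : Vars I k →₀ ℤ)) (1:Fq) : LaurentPoly I k)
        = ((monHom (Multiplicative.ofAdd (Finsupp.single v 1)) ^ n : (LaurentPoly I k)ˣ) : LaurentPoly I k) := by
      rw [← map_zpow, ← ofAdd_zsmul]; rfl
    rw [hmu, hmv, zVar_eq_monHom u, zVar_eq_monHom v]
    exact units_sub_dvd _ _ _ n

lemma evalHom_zVar_sub (z : Vars I k → Fqˣ) (u v : Vars I k) :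
    evalHom z (zVar k u - zVar k v) = (z u : Fq) - (z v : Fq) := by
  rw [map_sub]
  show evalHom z (AddMonoidAlgebra.single (Finsupp.single u 1) 1)
      - evalHom z (AddMonoidAlgebra.single (Finsupp.single v 1) 1) = (z u : Fq) - (z v : Fq)
  rw [evalHom_single, evalHom_single, charU_ofAdd_single, charU_ofAdd_single, one_mul, one_mul]

lemma zVar_sub_ne_zero (u v : Vars I k) (hu : u ≠ v) : zVar k u - zVar k v ≠ 0 := by
  intro h
  set z : Vars I k → Fqˣ := fun x => if x = u then two' else 1 with hzdef
  have h1 : evalHom z (zVar k u - zVar k v) = ((two' : Fqˣ) : Fq) - 1 := by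
    rw [evalHom_zVar_sub]
    have hzu : z u = two' := if_pos rfl
    have hzv : z v = 1 := if_neg (fun hh : v = u => hu hh.symm)
    rw [hzu, hzv, Units.val_one]
  rw [h, map_zero] at h1
  exact two'_ne_one (sub_eq_zero.1 h1.symm)

lemma subHom_zVar_sub (u v : Vars I k) (hu : u ≠ v) :
    subHom u v (zVar k u - zVar k v) = 0 := by
  rw [map_sub]
  show subHom u v (AddMonoidAlgebra.single (Finsupp.single u 1) 1)
      - subHom u v (AddMonoidAlgebra.single (Finsupp.single v 1) 1) = 0
  rw [subHom_single, subHom_single, gHom_single_u, gHom_single_v u v hu, sub_self]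

lemma zVar_sub_prime (u v : Vars I k) (hu : u ≠ v) : Prime (zVar k u - zVar k v) := by
  rw [← Ideal.span_singleton_prime (zVar_sub_ne_zero u v hu)]
  have hker : Ideal.span {zVar k u - zVar k v} = RingHom.ker (subHom u v) := by
    apply le_antisymm
    · rw [Ideal.span_le]
      intro x hx
      rw [Set.mem_singleton_iff] at hx
      subst hx
      exact subHom_zVar_sub u v hu
    · intro x hx
      rw [RingHom.mem_ker] at hx
      rw [Ideal.mem_span_singleton]
      have : x = x - subHom u v x := by rw [hx, sub_zero]
      rw [this]
      exact sub_subHom_dvd u v hu x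
  rw [hker]
  exact RingHom.ker_isPrime _

lemma charU_gHom (z : Vars I k → Fqˣ) (u v : Vars I k) (hu : u ≠ v) (e : Vars I k →₀ ℤ) :
    charU z (Multiplicative.ofAdd (gHom u v e))
      = charU (Function.update z u (z v)) (Multiplicative.ofAdd e) := by
  induction e using Finsupp.induction_linear with
  | zero => simp
  | add f g hf hg =>
    rw [map_add, ofAdd_add, ofAdd_add, map_mul, map_mul, hf, hg]
  | single sv n =>
    have hsmul : Finsupp.single sv n = n • Finsupp.single sv (1:ℤ) := by
      rw [Finsupp.smul_single, smul_eq_mul, mul_one]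
    rw [hsmul, map_zsmul, ofAdd_zsmul, ofAdd_zsmul, map_zpow, map_zpow]
    congr 1
    by_cases hsv : sv = u
    · subst hsv
      rw [gHom_single_u, charU_ofAdd_single, charU_ofAdd_single, Function.update_self]
    · have hg : gHom u v (Finsupp.single sv 1) = Finsupp.single sv 1 := by
        show (Finsupp.single sv 1 : Vars I k →₀ ℤ) + ((Finsupp.single sv (1:ℤ)) u) •
            ((Finsupp.single v 1 : Vars I k →₀ ℤ) - Finsupp.single u 1)
          = (Finsupp.single sv 1 : Vars I k →₀ ℤ)
        have hz : ((Finsupp.single sv (1:ℤ)) u) = 0 := by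
          rw [Finsupp.single_apply, if_neg (fun h : sv = u => hsv h)]
        rw [hz]; simp
      rw [hg, charU_ofAdd_single, charU_ofAdd_single, Function.update_of_ne hsv]

lemma evalHom_subHom (u v : Vars I k) (hu : u ≠ v) (z : Vars I k → Fqˣ)
    (r : LaurentPoly I k) :
    evalHom z (subHom u v r) = evalHom (Function.update z u (z v)) r := by
  induction r using AddMonoidAlgebra.induction_on with
  | add f g hf hg => rw [map_add, map_add, map_add, hf, hg]
  | smul c f hf => rw [subHom_smul, map_smul, map_smul, hf]
  | of e =>
    have hof : (AddMonoidAlgebra.of Fq (Vars I k →₀ ℤ) (Multiplicative.ofAdd e))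
        = AddMonoidAlgebra.single e 1 := rfl
    rw [hof, subHom_single, evalHom_single, evalHom_single, charU_gHom z u v hu]

/-- If `r` vanishes at all unit points with `z u = z v`, then `z_u - z_v ∣ r`. -/
lemma dvd_of_vanish (u v : Vars I k) (hu : u ≠ v)
    (r : LaurentPoly I k)
    (h : ∀ z : Vars I k → Fqˣ, z u = z v → evalHom z r = 0) :
    (zVar k u - zVar k v) ∣ r := by
  have hz : subHom u v r = 0 := by
    apply eval_zero_of_all
    intro z
    rw [evalHom_subHom u v hu]
    apply h
    rw [Function.update_self, Function.update_of_ne (Ne.symm hu)]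
  have : r = r - subHom u v r := by rw [hz, sub_zero]
  rw [this]
  exact sub_subHom_dvd u v hu r

lemma not_dvd_zVar_sub (u v u' v' : Vars I k) (hu' : u' ≠ v')
    (hne : ¬ ({u', v'} : Set (Vars I k)) ⊆ {u, v}) :
    ¬ (zVar k u - zVar k v) ∣ (zVar k u' - zVar k v') := by
  intro hdvd
  obtain ⟨w, hw1, hw2⟩ : ∃ w, w ∈ ({u', v'} : Set (Vars I k)) ∧ w ∉ ({u, v} : Set (Vars I k)) := by
    by_contra hc; push_neg at hc; exact hne hc
  have hneu : u ≠ w := by intro h; apply hw2; rw [← h]; exact Set.mem_insert u {v}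
  have hnev : v ≠ w := by intro h; apply hw2; rw [← h]; exact Set.mem_insert_of_mem u rfl
  set z : Vars I k → Fqˣ := fun x => if x = w then two' else 1 with hzdef
  have hzu : z u = 1 := if_neg hneu
  have hzv : z v = 1 := if_neg hnev
  have h0 : evalHom z (zVar k u - zVar k v) = 0 := by
    rw [evalHom_zVar_sub, hzu, hzv, sub_self]
  obtain ⟨m, hm⟩ := hdvd
  have hval : ((z u' : Fqˣ) : Fq) = ((z v' : Fqˣ) : Fq) := by
    have hv0 : evalHom z (zVar k u' - zVar k v') = 0 := by rw [hm, map_mul, h0, zero_mul]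
    rw [evalHom_zVar_sub] at hv0
    exact sub_eq_zero.1 hv0
  rw [Set.mem_insert_iff, Set.mem_singleton_iff] at hw1
  rcases hw1 with hw1 | hw1
  · have hzu' : z u' = two' := if_pos hw1.symm
    have hvw : v' ≠ w := by intro h; exact hu' (by rw [h, hw1])
    have hzv' : z v' = 1 := if_neg hvw
    rw [hzu', hzv', Units.val_one] at hval
    exact two'_ne_one hval
  · have hzv' : z v' = two' := if_pos hw1.symm
    have huw : u' ≠ w := by intro h; exact hu' (by rw [h, hw1])
    have hzu' : z u' = 1 := if_neg huw
    rw [hzu', hzv', Units.val_one] at hval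
    exact two'_ne_one hval.symm

/-- Main combinatorial lemma. -/
lemma prod_dvd (r : LaurentPoly I k)
    (S : Finset (Vars I k × Vars I k))
    (hord : ∀ p ∈ S, p.1.1 ≠ p.2.1)
    (hdist : ∀ p ∈ S, ∀ q ∈ S, p ≠ q → ¬ ({q.1, q.2} : Set (Vars I k)) ⊆ {p.1, p.2})
    (h : ∀ p ∈ S, ∀ z : Vars I k → Fqˣ, z p.1 = z p.2 → evalHom z r = 0) :
    (∏ p ∈ S, (zVar k p.1 - zVar k p.2)) ∣ r := by
  classical
  induction S using Finset.induction_on with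
  | empty => simp
  | @insert p S hp IH =>
    have hpne : p.1 ≠ p.2 := fun hh => hord p (Finset.mem_insert_self p S) (congrArg Sigma.fst hh)
    have hprime := zVar_sub_prime p.1 p.2 hpne
    have hdvd : (zVar k p.1 - zVar k p.2) ∣ r :=
      dvd_of_vanish p.1 p.2 hpne r (h p (Finset.mem_insert_self p S))
    obtain ⟨m, rfl⟩ := IH
      (fun q hq => hord q (Finset.mem_insert_of_mem hq))
      (fun q hq q' hq' => hdist q (Finset.mem_insert_of_mem hq) q' (Finset.mem_insert_of_mem hq'))
      (fun q hq => h q (Finset.mem_insert_of_mem hq))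
    rw [Finset.prod_insert hp]
    have hdm : (zVar k p.1 - zVar k p.2) ∣ m := by
      rcases hprime.dvd_mul.1 hdvd with hc | hc
      · exfalso
        obtain ⟨q, hqS, hqdvd⟩ := (hprime.dvd_finset_prod_iff _).1 hc
        have hqne : q.1 ≠ q.2 := fun hh =>
          hord q (Finset.mem_insert_of_mem hqS) (congrArg Sigma.fst hh)
        have hpq : p ≠ q := fun hh => hp (hh ▸ hqS)
        exact not_dvd_zVar_sub p.1 p.2 q.1 q.2 hqne
          (hdist p (Finset.mem_insert_self p S) q (Finset.mem_insert_of_mem hqS) hpq) hqdvd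
      · exact hc
    obtain ⟨m', rfl⟩ := hdm
    exact ⟨m', by ring⟩

lemma fst_swap_eq {a b x : Vars I k} (hab : a.1 = b.1) :
    ((Equiv.swap a b) x).1 = x.1 := by
  rw [Equiv.swap_apply_def]
  split_ifs with h1 h2
  · rw [h1, hab]
  · rw [h2, hab]
  · rfl

/-- if a color-symmetric Laurent polynomial `r` vanishes under the
substitution `z_{i,1} = z_{j,1}` for every ordered pair `(i,j)` of distinct
non-adjacent vertices (with `k_i, k_j ≥ 1`), then `r` is divisible by
`∏_{unordered pairs {i,j} distinct non-adjacent} ∏_{b,c} (z_{i,b} - z_{j,c})`. -/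
theorem stmt13
    (I A : Type) [Fintype I] [Fintype A] [DecidableEq I] [LinearOrder I]
    (s t : A → I) (hNoLoops : ∀ a, s a ≠ t a)
    (k : I → ℕ) (r : LaurentPoly I k)
    (hsym : ColorSym r)
    (hvanish : ∀ i j, i ≠ j → ¬ Adjacent s t i j →
      ∀ (hi : 0 < k i) (hj : 0 < k j),
        ∀ z : Vars I k → Fq, (∀ sv, z sv ≠ 0) →
          z ⟨i, ⟨0, hi⟩⟩ = z ⟨j, ⟨0, hj⟩⟩ → evalLaurent r z = 0) :
    (∏ i, ∏ j, if i < j ∧ ¬ Adjacent s t i j then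
        ∏ b : Fin (k i), ∏ c : Fin (k j), (zVar k ⟨i, b⟩ - zVar k ⟨j, c⟩)
      else 1) ∣ r := by
  classical
  -- the key vanishing property for individual pairs of variables
  have hkey : ∀ (i j : I) (b : Fin (k i)) (c : Fin (k j)), i ≠ j → ¬ Adjacent s t i j →
      ∀ z : Vars I k → Fqˣ, z ⟨i, b⟩ = z ⟨j, c⟩ → evalHom z r = 0 := by
    intro i j b c hij hadj z hz
    have hi : 0 < k i := b.pos
    have hj : 0 < k j := c.pos
    set u : Vars I k := ⟨i, b⟩ with hu
    set v : Vars I k := ⟨j, c⟩ with hv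
    set u0 : Vars I k := ⟨i, ⟨0, hi⟩⟩ with hu0
    set v0 : Vars I k := ⟨j, ⟨0, hj⟩⟩ with hv0
    have huv0 : u ≠ v0 := fun hh => hij (congrArg Sigma.fst hh)
    have huv : u ≠ v := fun hh => hij (congrArg Sigma.fst hh)
    have hv0u0 : v0 ≠ u0 := fun hh => hij (congrArg Sigma.fst hh).symm
    have hv0u : v0 ≠ u := fun hh => hij (congrArg Sigma.fst hh).symm
    set σ : Vars I k ≃ Vars I k := (Equiv.swap u u0).trans (Equiv.swap v v0) with hσ
    have hσcol : ∀ sv : Vars I k, (σ sv).1 = sv.1 := by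
      intro sv
      rw [hσ, Equiv.trans_apply,
        fst_swap_eq (a := v) (b := v0) (rfl : v.1 = v0.1),
        fst_swap_eq (a := u) (b := u0) (rfl : u.1 = u0.1)]
    have hσu0 : σ u0 = u := by
      rw [hσ, Equiv.trans_apply, Equiv.swap_apply_right]
      exact Equiv.swap_apply_of_ne_of_ne huv huv0
    have hσv0 : σ v0 = v := by
      rw [hσ, Equiv.trans_apply, Equiv.swap_apply_of_ne_of_ne hv0u hv0u0]
      exact Equiv.swap_apply_right v v0
    have hzf : ∀ sv : Vars I k, (fun sv => ((z sv : Fqˣ) : Fq)) sv ≠ 0 := fun sv => (z sv).ne_zero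
    have h1 : evalLaurent r ((fun sv => ((z sv : Fqˣ) : Fq)) ∘ σ) = evalLaurent r (fun sv => ((z sv : Fqˣ) : Fq)) :=
      hsym σ hσcol _ hzf
    have h2 : evalLaurent r ((fun sv => ((z sv : Fqˣ) : Fq)) ∘ σ) = 0 := by
      apply hvanish i j hij hadj hi hj
      · intro sv
        exact (z (σ sv)).ne_zero
      · show ((z (σ u0) : Fqˣ) : Fq) = ((z (σ v0) : Fqˣ) : Fq)
        rw [hσu0, hσv0, hz]
    rw [← evalLaurent_eq_evalHom, ← h1, h2]
  -- rewrite the product over a finset of pairs of variables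
  set C : Vars I k × Vars I k → Prop := fun p => p.1.1 < p.2.1 ∧ ¬ Adjacent s t p.1.1 p.2.1 with hC
  set S : Finset (Vars I k × Vars I k) := Finset.univ.filter C with hS
  have hsigma : ∀ (f : Vars I k → LaurentPoly I k),
      (∏ u : Vars I k, f u) = ∏ i, ∏ b : Fin (k i), f ⟨i, b⟩ := by
    intro f
    rw [← Finset.univ_sigma_univ, Finset.prod_sigma]
  have hprodeq : (∏ i, ∏ j, if i < j ∧ ¬ Adjacent s t i j then
        ∏ b : Fin (k i), ∏ c : Fin (k j), (zVar k ⟨i, b⟩ - zVar k ⟨j, c⟩)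
      else 1) = ∏ p ∈ S, (zVar k p.1 - zVar k p.2) := by
    calc (∏ i, ∏ j, if i < j ∧ ¬ Adjacent s t i j then
        ∏ b : Fin (k i), ∏ c : Fin (k j), (zVar k ⟨i, b⟩ - zVar k ⟨j, c⟩) else 1)
        = ∏ i, ∏ j, ∏ b : Fin (k i), ∏ c : Fin (k j),
            (if i < j ∧ ¬ Adjacent s t i j then (zVar k ⟨i, b⟩ - zVar k ⟨j, c⟩) else 1) := by
          refine Finset.prod_congr rfl fun i _ => Finset.prod_congr rfl fun j _ => ?_
          by_cases hcc : i < j ∧ ¬ Adjacent s t i j <;> simp [hcc]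
      _ = ∏ i, ∏ b : Fin (k i), ∏ j, ∏ c : Fin (k j),
            (if i < j ∧ ¬ Adjacent s t i j then (zVar k ⟨i, b⟩ - zVar k ⟨j, c⟩) else 1) := by
          refine Finset.prod_congr rfl fun i _ => Finset.prod_comm
      _ = ∏ i, ∏ b : Fin (k i), ∏ v : Vars I k,
            (if C (⟨i, b⟩, v) then (zVar k ⟨i, b⟩ - zVar k v) else 1) := by
          refine Finset.prod_congr rfl fun i _ => Finset.prod_congr rfl fun b _ => ?_
          exact (hsigma fun v => if C (⟨i, b⟩, v) then (zVar k ⟨i, b⟩ - zVar k v) else 1).symm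
      _ = ∏ u : Vars I k, ∏ v : Vars I k,
            (if C (u, v) then (zVar k u - zVar k v) else 1) := by
          exact (hsigma fun u => ∏ v : Vars I k,
            (if C (u, v) then (zVar k u - zVar k v) else 1)).symm
      _ = ∏ p ∈ S, (zVar k p.1 - zVar k p.2) := by
          rw [hS, Finset.prod_filter, Fintype.prod_prod_type]
  rw [hprodeq]
  apply prod_dvd
  · intro p hp
    rw [hS, Finset.mem_filter] at hp
    exact ne_of_lt hp.2.1
  · intro p hp q hq hpq hsub
    rw [hS, Finset.mem_filter] at hp hq
    have hq1 : q.1 ∈ ({p.1, p.2} : Set (Vars I k)) := hsub (Set.mem_insert _ _)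
    have hq2 : q.2 ∈ ({p.1, p.2} : Set (Vars I k)) := hsub (Set.mem_insert_of_mem _ rfl)
    rw [Set.mem_insert_iff, Set.mem_singleton_iff] at hq1 hq2
    rcases hq1 with hq1 | hq1 <;> rcases hq2 with hq2 | hq2
    · have hlt := hq.2.1
      rw [hq1, hq2] at hlt
      exact lt_irrefl _ hlt
    · exact hpq (Prod.ext hq1 hq2).symm
    · have hlt := hq.2.1
      rw [hq1, hq2] at hlt
      exact lt_irrefl _ (hp.2.1.trans hlt)
    · have hlt := hq.2.1
      rw [hq1, hq2] at hlt
      exact lt_irrefl _ hlt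
  · intro p hp z hz
    rw [hS, Finset.mem_filter] at hp
    have hij : p.1.1 ≠ p.2.1 := ne_of_lt hp.2.1
    exact hkey p.1.1 p.2.1 p.1.2 p.2.2 hij hp.2.2 z hz

end ADEShuffle
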